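/- Let V = Fin 4 → ZMod 3 carry the standard nondegenerate alternating bilinear form B(x,y) = x₀y₁ − x₁y₀ + x₂y₃ − x₃y₂. Then the simple graph whose vertices are the 40 projective points of V (1-dimensional subspaces, i.e. elements of Projectivization (ZMod 3) V), with distinct points [u], [v] adjacent if and only if B(u,v) ≠ 0 (a condition independent of the chosen representatives), is strongly regular with parameters (40, 27, 18, 18). -/

import Mathlib

noncomputable section

/-- The standard nondegenerate alternating bilinear form
`B(x,y) = x₀y₁ − x₁y₀ + x₂y₃ − x₃y₂` on `GF(3)^4`. -/
def sp4Form (x y : Fin 4 → ZMod 3) : ZMod 3 :=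
  x 0 * y 1 - x 1 * y 0 + x 2 * y 3 - x 3 * y 2

lemma sp4Form_skew (x y : Fin 4 → ZMod 3) : sp4Form y x = -sp4Form x y := by
  unfold sp4Form; ring

/-- The graph on the 40 projective points of `GF(3)^4`: distinct points `[u]`,
`[v]` adjacent iff `B(u,v) ≠ 0` (independent of the representatives). -/
def sp4NonPerpGraph :
    SimpleGraph (Projectivization (ZMod 3) (Fin 4 → ZMod 3)) where
  Adj p q := p ≠ q ∧ sp4Form p.rep q.rep ≠ 0
  symm := by
    constructor
    rintro p q ⟨h1, h2⟩
    refine ⟨h1.symm, ?_⟩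
    rw [sp4Form_skew]
    exact neg_ne_zero.mpr h2
  loopless := by constructor; rintro p ⟨h, -⟩; exact h rfl

instance : Finite (Projectivization (ZMod 3) (Fin 4 → ZMod 3)) :=
  Quotient.finite _

instance : Fintype (Projectivization (ZMod 3) (Fin 4 → ZMod 3)) :=
  Fintype.ofFinite _

instance : DecidableRel sp4NonPerpGraph.Adj := Classical.decRel _

/-! ### Auxiliary setup: normalized representatives -/

abbrev V3 := Fin 4 → ZMod 3

/-- A vector is normalized if its first nonzero coordinate equals `1`. -/
def Nrm (v : V3) : Prop := ∃ i, v i = 1 ∧ ∀ j, j < i → v j = 0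

instance : DecidablePred Nrm := fun v => by unfold Nrm; infer_instance

abbrev PP := {v : V3 // Nrm v}

lemma Nrm.ne_zero {v : V3} (h : Nrm v) : v ≠ 0 := by
  obtain ⟨i, h1, -⟩ := h
  intro hv
  rw [hv] at h1
  simp at h1

/-- The canonical map from normalized vectors to projective points. -/
def fmap (u : PP) : Projectivization (ZMod 3) V3 :=
  Projectivization.mk _ u.val u.2.ne_zero

lemma sp4Form_smul (a b : ZMod 3) (u v : V3) :
    sp4Form (a • u) (b • v) = a * b * sp4Form u v := by
  unfold sp4Form
  simp only [Pi.smul_apply, smul_eq_mul]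
  ring

set_option maxRecDepth 10000 in
lemma fmap_injective : Function.Injective fmap := by
  intro u v h
  obtain ⟨a, ha⟩ :=
    (Projectivization.mk_eq_mk_iff (ZMod 3) u.val v.val u.2.ne_zero v.2.ne_zero).mp h
  have key : ∀ x y : V3, Nrm x → Nrm y → ∀ a : ZMod 3, a ≠ 0 → a • y = x → x = y := by
    decide
  exact Subtype.ext (key u.val v.val u.2 v.2 (a : ZMod 3) a.ne_zero ha)

set_option maxRecDepth 10000 in
lemma fmap_surjective : Function.Surjective fmap := by
  intro p
  have key : ∀ v : V3, v ≠ 0 → ∃ w : V3, Nrm w ∧ ∃ a : ZMod 3, a ≠ 0 ∧ a • v = w := by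
    decide
  obtain ⟨w, hw, a, ha, haw⟩ := key p.rep p.rep_nonzero
  refine ⟨⟨w, hw⟩, ?_⟩
  have : Projectivization.mk (ZMod 3) w hw.ne_zero
      = Projectivization.mk (ZMod 3) p.rep p.rep_nonzero := by
    rw [Projectivization.mk_eq_mk_iff]
    exact ⟨Units.mk0 a ha, haw⟩
  simpa only [fmap, Projectivization.mk_rep] using this

/-- The transfer equivalence. -/
def eEquiv : PP ≃ Projectivization (ZMod 3) V3 :=
  Equiv.ofBijective fmap ⟨fmap_injective, fmap_surjective⟩

lemma sp4Form_rep_ne_zero_iff (u v : V3) (hu : u ≠ 0) (hv : v ≠ 0) :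
    sp4Form (Projectivization.mk (ZMod 3) u hu).rep
        (Projectivization.mk (ZMod 3) v hv).rep ≠ 0 ↔ sp4Form u v ≠ 0 := by
  obtain ⟨a, ha⟩ := Projectivization.exists_smul_eq_mk_rep (ZMod 3) u hu
  obtain ⟨b, hb⟩ := Projectivization.exists_smul_eq_mk_rep (ZMod 3) v hv
  rw [← ha, ← hb, Units.smul_def, Units.smul_def, sp4Form_smul]
  constructor
  · intro h h0
    exact h (by rw [h0, mul_zero])
  · intro h h0
    rcases mul_eq_zero.mp h0 with h1 | h1
    · rcases mul_eq_zero.mp h1 with h2 | h2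
      · exact a.ne_zero h2
      · exact b.ne_zero h2
    · exact h h1

lemma adj_iff (u v : PP) :
    sp4NonPerpGraph.Adj (fmap u) (fmap v) ↔ (u ≠ v ∧ sp4Form u.val v.val ≠ 0) := by
  show (fmap u ≠ fmap v ∧ _) ↔ _
  rw [fmap_injective.ne_iff]
  exact and_congr_right fun _ =>
    sp4Form_rep_ne_zero_iff u.val v.val u.2.ne_zero v.2.ne_zero

/-- The concrete graph on normalized vectors. -/
def G' : SimpleGraph PP where
  Adj u v := u ≠ v ∧ sp4Form u.val v.val ≠ 0
  symm := by
    constructor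
    rintro u v ⟨h1, h2⟩
    refine ⟨h1.symm, ?_⟩
    rw [sp4Form_skew]
    exact neg_ne_zero.mpr h2
  loopless := by constructor; rintro u ⟨h, -⟩; exact h rfl

instance : DecidableRel G'.Adj := fun u v =>
  inferInstanceAs (Decidable (u ≠ v ∧ sp4Form u.val v.val ≠ 0))

lemma adj_iff' (u v : PP) :
    sp4NonPerpGraph.Adj (fmap u) (fmap v) ↔ G'.Adj u v := adj_iff u v

/-- Neighbor sets correspond under the equivalence. -/
def nbhdEquiv (u : PP) :
    G'.neighborSet u ≃ sp4NonPerpGraph.neighborSet (fmap u) :=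
  Equiv.subtypeEquiv eEquiv fun w => by
    rw [SimpleGraph.mem_neighborSet, SimpleGraph.mem_neighborSet]
    exact (adj_iff' u w).symm

/-- Common neighbor sets correspond under the equivalence. -/
def cnEquiv (u v : PP) :
    G'.commonNeighbors u v ≃ sp4NonPerpGraph.commonNeighbors (fmap u) (fmap v) :=
  Equiv.subtypeEquiv eEquiv fun w => by
    rw [SimpleGraph.mem_commonNeighbors, SimpleGraph.mem_commonNeighbors]
    exact and_congr ((adj_iff' u w).symm) ((adj_iff' v w).symm)

set_option maxHeartbeats 2000000 in
lemma G'_card : Fintype.card PP = 40 := by decide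

set_option maxHeartbeats 2000000 in
lemma G'_regular : ∀ u : PP, Fintype.card (G'.neighborSet u) = 27 := by
  have key : ∀ u : PP,
      Fintype.card {w : PP // u ≠ w ∧ sp4Form u.val w.val ≠ 0} = 27 := by decide
  intro u
  rw [← key u]
  apply Fintype.card_congr
  exact Equiv.subtypeEquiv (Equiv.refl _) fun w => by
    rw [SimpleGraph.mem_neighborSet]; rfl

set_option maxHeartbeats 4000000 in
lemma G'_cn : ∀ u v : PP, Fintype.card (G'.commonNeighbors u v) =
    Fintype.card {w : PP // G'.Adj u w ∧ G'.Adj v w} := fun u v =>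
  Fintype.card_congr <| Equiv.subtypeEquiv (Equiv.refl _) fun w => by
    rw [SimpleGraph.mem_commonNeighbors]; rfl

set_option maxHeartbeats 4000000 in
lemma G'_of_adj : ∀ u v : PP, G'.Adj u v →
    Fintype.card (G'.commonNeighbors u v) = 18 := by
  have key : ∀ u v : PP, (u ≠ v ∧ sp4Form u.val v.val ≠ 0) →
      Fintype.card {w : PP // (u ≠ w ∧ sp4Form u.val w.val ≠ 0) ∧
        (v ≠ w ∧ sp4Form v.val w.val ≠ 0)} = 18 := by decide
  intro u v h
  rw [G'_cn]
  exact key u v h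

set_option maxHeartbeats 4000000 in
lemma G'_of_not_adj : ∀ u v : PP, u ≠ v → ¬G'.Adj u v →
    Fintype.card (G'.commonNeighbors u v) = 18 := by
  have key : ∀ u v : PP, u ≠ v → ¬(u ≠ v ∧ sp4Form u.val v.val ≠ 0) →
      Fintype.card {w : PP // (u ≠ w ∧ sp4Form u.val w.val ≠ 0) ∧
        (v ≠ w ∧ sp4Form v.val w.val ≠ 0)} = 18 := by decide
  intro u v h h'
  rw [G'_cn]
  exact key u v h h'

/-- The graph on the 40 projective points of the symplectic
`GF(3)^4`-space, distinct points adjacent iff they are non-perpendicular, is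
strongly regular with parameters `(40, 27, 18, 18)`. -/
theorem stmt_10 : sp4NonPerpGraph.IsSRGWith 40 27 18 18 := by
  have hfe : ∀ u : PP, fmap u = eEquiv u := fun _ => rfl
  constructor
  · rw [← Fintype.card_congr eEquiv]
    exact G'_card
  · intro p
    obtain ⟨u, rfl⟩ := fmap_surjective p
    rw [← SimpleGraph.card_neighborSet_eq_degree,
      ← Fintype.card_congr (nbhdEquiv u)]
    exact G'_regular u
  · intro p q hpq
    obtain ⟨u, rfl⟩ := fmap_surjective p
    obtain ⟨v, rfl⟩ := fmap_surjective q
    rw [← Fintype.card_congr (cnEquiv u v)]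
    exact G'_of_adj u v ((adj_iff' u v).mp hpq)
  · intro p q hne hpq
    obtain ⟨u, rfl⟩ := fmap_surjective p
    obtain ⟨v, rfl⟩ := fmap_surjective q
    rw [← Fintype.card_congr (cnEquiv u v)]
    exact G'_of_not_adj u v (fun h => hne (congrArg fmap h))
      (fun h => hpq ((adj_iff' u v).mpr h))

end
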